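/- Let 0 < ε < 1/3 and let B = (U ∪ W, E) be an ε-regular bipartite graph. Then every spanning subgraph B' = (U ∪ W, E') of B with E' ⊆ E and |E \ E'| ≤ ε⁴|E| is 2ε-regular. -/

import Mathlib

/-- Number of (ordered) pairs `(a,b) ∈ A × B` with `R a b`; for a bipartite graph between
disjoint sets this is the number of edges between `A` and `B`. -/
noncomputable def eCnt {V : Type*} (R : V → V → Prop) (A B : Set V) : ℕ :=
  Nat.card {x : V × V // x.1 ∈ A ∧ x.2 ∈ B ∧ R x.1 x.2}

/-- Edge density between `A` and `B`. -/
noncomputable def dens {V : Type*} (R : V → V → Prop) (A B : Set V) : ℝ :=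
  (eCnt R A B : ℝ) / ((Nat.card A : ℝ) * (Nat.card B : ℝ))

/-- The pair `(A,B)` is `(ε,p)`-regular. -/
def RegPair {V : Type*} (ε p : ℝ) (R : V → V → Prop) (A B : Set V) : Prop :=
  ∀ A' ⊆ A, ∀ B' ⊆ B, ε * Nat.card A ≤ (Nat.card A' : ℝ) → ε * Nat.card B ≤ (Nat.card B' : ℝ) →
    |dens R A' B' - dens R A B| ≤ ε * p

/-- The pair `(A,B)` is `ε`-regular, i.e. `(ε,d)`-regular with `d` its density. -/
def EpsReg {V : Type*} (ε : ℝ) (R : V → V → Prop) (A B : Set V) : Prop :=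
  RegPair ε (dens R A B) R A B

/-- The pair `(A,B)` is `(ε,p)`-lower-regular. -/
def LowerReg {V : Type*} (ε p : ℝ) (R : V → V → Prop) (A B : Set V) : Prop :=
  ∀ A' ⊆ A, ∀ B' ⊆ B, ε * Nat.card A ≤ (Nat.card A' : ℝ) → ε * Nat.card B ≤ (Nat.card B' : ℝ) →
    (1 - ε) * p ≤ dens R A' B'

section Aux

variable {V : Type*} [Fintype V]

lemma eCnt_eq_ncard (R : V → V → Prop) (A B : Set V) :
    eCnt R A B = ({x : V × V | x.1 ∈ A ∧ x.2 ∈ B ∧ R x.1 x.2}).ncard := rfl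

lemma eCnt_mono (R : V → V → Prop) {A B A' B' : Set V} (hA : A' ⊆ A) (hB : B' ⊆ B) :
    eCnt R A' B' ≤ eCnt R A B := by
  rw [eCnt_eq_ncard, eCnt_eq_ncard]
  exact Set.ncard_le_ncard (fun x hx => ⟨hA hx.1, hB hx.2.1, hx.2.2⟩) (Set.toFinite _)

lemma eCnt_split (E E' : V → V → Prop) (hsub : ∀ u w, E' u w → E u w) (A B : Set V) :
    eCnt E A B = eCnt E' A B + eCnt (fun u w => E u w ∧ ¬ E' u w) A B := by
  rw [eCnt_eq_ncard, eCnt_eq_ncard, eCnt_eq_ncard]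
  have hset : {x : V × V | x.1 ∈ A ∧ x.2 ∈ B ∧ E x.1 x.2}
      = {x : V × V | x.1 ∈ A ∧ x.2 ∈ B ∧ E' x.1 x.2}
        ∪ {x : V × V | x.1 ∈ A ∧ x.2 ∈ B ∧ E x.1 x.2 ∧ ¬ E' x.1 x.2} := by
    ext x
    simp only [Set.mem_setOf_eq, Set.mem_union]
    constructor
    · rintro ⟨h1, h2, h3⟩
      by_cases h : E' x.1 x.2
      · exact Or.inl ⟨h1, h2, h⟩
      · exact Or.inr ⟨h1, h2, h3, h⟩
    · rintro (⟨h1, h2, h3⟩ | ⟨h1, h2, h3, _⟩)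
      · exact ⟨h1, h2, hsub _ _ h3⟩
      · exact ⟨h1, h2, h3⟩
  have hdisj : Disjoint {x : V × V | x.1 ∈ A ∧ x.2 ∈ B ∧ E' x.1 x.2}
      {x : V × V | x.1 ∈ A ∧ x.2 ∈ B ∧ E x.1 x.2 ∧ ¬ E' x.1 x.2} := by
    rw [Set.disjoint_left]
    rintro x ⟨_, _, h3⟩ ⟨_, _, _, h4⟩
    exact h4 h3
  rw [hset, Set.ncard_union_eq hdisj (Set.toFinite _) (Set.toFinite _)]

lemma eCnt_empty_left (R : V → V → Prop) (B : Set V) : eCnt R (∅ : Set V) B = 0 := by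
  rw [eCnt_eq_ncard]
  convert Set.ncard_empty (V × V)
  ext x; simp

lemma eCnt_empty_right (R : V → V → Prop) (A : Set V) : eCnt R A (∅ : Set V) = 0 := by
  rw [eCnt_eq_ncard]
  convert Set.ncard_empty (V × V)
  ext x; simp

end Aux

set_option maxHeartbeats 1600000 in
/-- Removing at most an `ε⁴`-fraction of the edges of an `ε`-regular bipartite graph
(`0 < ε < 1/3`) leaves a `2ε`-regular bipartite graph. -/
theorem subgraph_regular {V : Type*} [Fintype V] (U W : Set V) (E E' : V → V → Prop)
    (ε : ℝ) (hε : 0 < ε) (hε3 : ε < 1 / 3) (hUW : Disjoint U W)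
    (hsub : ∀ u w, E' u w → E u w)
    (hreg : EpsReg ε E U W)
    (hdel : (eCnt (fun u w => E u w ∧ ¬ E' u w) U W : ℝ) ≤ ε ^ 4 * eCnt E U W) :
    EpsReg (2 * ε) E' U W := by
  intro A' hA' B' hB' hA hB
  by_cases hU : Nat.card U = 0
  · have hUe : U = ∅ := (Set.ncard_eq_zero (Set.toFinite U)).mp hU
    have hA'e : A' = ∅ := Set.subset_empty_iff.mp (hUe ▸ hA')
    simp [dens, hUe, hA'e, eCnt_empty_left]
  by_cases hW : Nat.card W = 0
  · have hWe : W = ∅ := (Set.ncard_eq_zero (Set.toFinite W)).mp hW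
    have hB'e : B' = ∅ := Set.subset_empty_iff.mp (hWe ▸ hB')
    simp [dens, hWe, hB'e, eCnt_empty_right]
  -- main case
  have hnU : (0:ℝ) < Nat.card U := by exact_mod_cast Nat.pos_of_ne_zero hU
  have hnW : (0:ℝ) < Nat.card W := by exact_mod_cast Nat.pos_of_ne_zero hW
  have ha'pos : (0:ℝ) < Nat.card A' := lt_of_lt_of_le (by positivity) hA
  have hb'pos : (0:ℝ) < Nat.card B' := lt_of_lt_of_le (by positivity) hB
  set D : V → V → Prop := fun u w => E u w ∧ ¬ E' u w with hDdef
  have hsplitUW : dens E U W = dens E' U W + dens D U W := by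
    unfold dens
    rw [eCnt_split E E' hsub, Nat.cast_add, add_div]
  have hsplitAB : dens E A' B' = dens E' A' B' + dens D A' B' := by
    unfold dens
    rw [eCnt_split E E' hsub, Nat.cast_add, add_div]
  have hd0 : 0 ≤ dens E U W := by unfold dens; positivity
  have hdD0 : 0 ≤ dens D U W := by unfold dens; positivity
  have hdloc0 : 0 ≤ dens D A' B' := by unfold dens; positivity
  have hdD : dens D U W ≤ ε ^ 4 * dens E U W := by
    unfold dens
    rw [← mul_div_assoc]
    exact div_le_div_of_nonneg_right hdel (by positivity) |>.trans_eq rfl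
  have hdloc : dens D A' B' ≤ ε ^ 2 / 4 * dens E U W := by
    have h1 : (eCnt D A' B' : ℝ) ≤ ε ^ 4 * eCnt E U W :=
      le_trans (Nat.cast_le.mpr (eCnt_mono D hA' hB')) hdel
    have h2 : 4 * ε ^ 2 * ((Nat.card U : ℝ) * (Nat.card W : ℝ))
        ≤ (Nat.card A' : ℝ) * (Nat.card B' : ℝ) := by
      nlinarith [mul_le_mul hA hB (by positivity : (0:ℝ) ≤ 2 * ε * Nat.card W) ha'pos.le]
    have h3 : dens D A' B' ≤ ε ^ 4 * (eCnt E U W : ℝ)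
        / (4 * ε ^ 2 * ((Nat.card U : ℝ) * (Nat.card W : ℝ))) := by
      unfold dens
      exact div_le_div₀ (by positivity) h1 (by positivity) h2
    refine h3.trans (le_of_eq ?_)
    unfold dens
    field_simp
  have hE : |dens E A' B' - dens E U W| ≤ ε * dens E U W := by
    refine hreg A' hA' B' hB' ?_ ?_
    · nlinarith [mul_nonneg hε.le hnU.le]
    · nlinarith [mul_nonneg hε.le hnW.le]
  rw [abs_le] at hE
  have hA'eq : dens E' A' B' = dens E A' B' - dens D A' B' := by linarith
  have hUWeq : dens E' U W = dens E U W - dens D U W := by linarith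
  rw [hA'eq, hUWeq, abs_le]
  have h2e : 2 * ε * dens D U W ≤ 2 * ε * (ε ^ 4 * dens E U W) :=
    mul_le_mul_of_nonneg_left hdD (by linarith)
  have q1 : ε ^ 2 ≤ ε / 3 := by nlinarith
  have q3 : ε ^ 3 ≤ ε / 9 := by nlinarith [mul_le_mul_of_nonneg_left q1 hε.le]
  have q4 : ε ^ 4 ≤ ε / 27 := by nlinarith [mul_le_mul_of_nonneg_left q3 hε.le]
  have q5 : ε ^ 5 ≤ ε / 81 := by nlinarith [mul_le_mul_of_nonneg_left q4 hε.le]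
  have key : (ε + ε ^ 2 / 4 + ε ^ 4 + 2 * ε * ε ^ 4) * dens E U W ≤ 2 * ε * dens E U W := by
    apply mul_le_mul_of_nonneg_right _ hd0
    nlinarith [q1, q4, q5]
  have hm2 : 0 ≤ ε ^ 2 * dens E U W := by positivity
  have hm3 : 0 ≤ ε ^ 4 * dens E U W := by positivity
  have hE1 := hE.1
  have hE2 := hE.2
  constructor
  · nlinarith [hE1, hE2, hdloc0, hdloc, hdD, hdD0, h2e, key, hm2, hm3]
  · nlinarith [hE1, hE2, hdloc0, hdloc, hdD, hdD0, h2e, key, hm2, hm3]
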